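/- Let (Ω, 𝓕, P) be a probability space equipped with a filtration (𝓕_t)_{t ∈ [0,T]} for some T > 0, and let (E_t)_{t∈[0,T]} be a dynamic nonlinear expectation satisfying monotonicity, time consistency, the 1-0 law, and continuity from below. Let X : [0,T] × Ω → ℝ be progressively measurable, nonnegative, with |X| ≤ C for some constant C, so that X_τ ∈ L^∞(𝓕_T) for every stopping time τ. Suppose that for every t ∈ [0,T], V_t ∈ L^∞(𝓕_t) is an essential supremum of the family {E_t(X_τ) : τ ∈ S_{t,T}}. Then V is an E-supermartingale: for all 0 ≤ s ≤ t ≤ T, E_s(V_t) ≤ V_s P-a.s. -/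

import Mathlib

open MeasureTheory Filter

/-- `ξ` belongs to `L^∞` of the σ-algebra `m'`: it is `m'`-measurable and
(everywhere) bounded. -/
def MemLinfty {Ω : Type*} (m' : MeasurableSpace Ω) (ξ : Ω → ℝ) : Prop :=
  Measurable[m'] ξ ∧ ∃ c : ℝ, ∀ ω, |ξ ω| ≤ c

/-- `g` is an essential supremum of the family `(f i)_{i ∈ I}` of functions:
`g` is measurable, `f i ≤ g` a.s. for every `i`, and `g ≤ h` a.s. for every
measurable `h` dominating every `f i` a.s. -/
def IsEssentialSup {Ω : Type*} [MeasurableSpace Ω] (P : Measure Ω)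
    {I : Type*} (f : I → Ω → ℝ) (g : Ω → ℝ) : Prop :=
  Measurable g ∧ (∀ i, f i ≤ᵐ[P] g) ∧
    ∀ h : Ω → ℝ, Measurable h → (∀ i, f i ≤ᵐ[P] h) → g ≤ᵐ[P] h

/-- Proposition 3.1: the value process of the optimal stopping problem under a
dynamic nonlinear expectation (monotone, time consistent, satisfying the 1-0
law and continuous from below) is an `E`-supermartingale. -/
theorem value_process_is_nonlinear_supermartingale
    {Ω : Type*} {m : MeasurableSpace Ω} (P : Measure Ω) [IsProbabilityMeasure P]
    (𝓕 : Filtration ℝ m) (T : ℝ) (hT : 0 < T)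
    (E : ℝ → (Ω → ℝ) → Ω → ℝ)
    (hErange : ∀ t ∈ Set.Icc (0:ℝ) T, ∀ ξ : Ω → ℝ,
      MemLinfty (𝓕 T) ξ → MemLinfty (𝓕 t) (E t ξ))
    (hmono : ∀ t ∈ Set.Icc (0:ℝ) T, ∀ ξ η : Ω → ℝ,
      MemLinfty (𝓕 T) ξ → MemLinfty (𝓕 T) η → ξ ≤ᵐ[P] η → E t ξ ≤ᵐ[P] E t η)
    (htc : ∀ s t : ℝ, 0 ≤ s → s ≤ t → t ≤ T → ∀ ξ : Ω → ℝ,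
      MemLinfty (𝓕 T) ξ → E s (E t ξ) =ᵐ[P] E s ξ)
    (h10 : ∀ t ∈ Set.Icc (0:ℝ) T, ∀ ξ : Ω → ℝ, MemLinfty (𝓕 T) ξ →
      ∀ A : Set Ω, MeasurableSet[𝓕 t] A →
        A.indicator (E t ξ) =ᵐ[P] E t (A.indicator ξ))
    (hcb : ∀ t ∈ Set.Icc (0:ℝ) T, ∀ (ξn : ℕ → Ω → ℝ) (ξ : Ω → ℝ),
      (∀ n, MemLinfty (𝓕 T) (ξn n)) → MemLinfty (𝓕 T) ξ →
      (∃ c : ℝ, ∀ n ω, |ξn n ω| ≤ c) →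
      (∀ᵐ ω ∂P, Monotone fun n => ξn n ω) →
      (∀ᵐ ω ∂P, Tendsto (fun n => ξn n ω) atTop (nhds (ξ ω))) →
      ∀ᵐ ω ∂P, Tendsto (fun n => E t (ξn n) ω) atTop (nhds (E t ξ ω)))
    (X : ℝ → Ω → ℝ) (hX : ProgMeasurable 𝓕 X)
    (hXpos : ∀ s ω, 0 ≤ X s ω) (C : ℝ) (hC : ∀ s ω, |X s ω| ≤ C)
    (V : ℝ → Ω → ℝ)
    (hVmem : ∀ t ∈ Set.Icc (0:ℝ) T, MemLinfty (𝓕 t) (V t))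
    (hVess : ∀ t ∈ Set.Icc (0:ℝ) T,
      IsEssentialSup P
        (fun τ : {τ : Ω → ℝ // IsStoppingTime 𝓕 (fun ω => (τ ω : WithTop ℝ)) ∧ ∀ ω, t ≤ τ ω ∧ τ ω ≤ T} =>
          E t (fun ω => X (τ.1 ω) ω))
        (V t)) :
    ∀ s t : ℝ, 0 ≤ s → s ≤ t → t ≤ T → E s (V t) ≤ᵐ[P] V s := by
  classical
  intro s t hs hst htT
  have ht0 : (0:ℝ) ≤ t := hs.trans hst
  have htmem : t ∈ Set.Icc (0:ℝ) T := ⟨ht0, htT⟩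
  have hsmem : s ∈ Set.Icc (0:ℝ) T := ⟨hs, hst.trans htT⟩
  -- index type
  set I := {τ : Ω → ℝ // IsStoppingTime 𝓕 (fun ω => (τ ω : WithTop ℝ)) ∧ ∀ ω, t ≤ τ ω ∧ τ ω ≤ T} with hI
  set f : I → Ω → ℝ := fun τ => E t (fun ω => X (τ.1 ω) ω) with hf
  -- membership of stopped values in L∞(𝓕 T)
  have hstMem : ∀ (τ : Ω → ℝ), IsStoppingTime 𝓕 (fun ω => (τ ω : WithTop ℝ)) → (∀ ω, τ ω ≤ T) →
      MemLinfty (𝓕 T) (fun ω => X (τ ω) ω) := by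
    intro τ hτ hle
    exact ⟨(stronglyMeasurable_stoppedValue_of_le hX hτ
        (fun ω => WithTop.coe_le_coe.2 (hle ω))).measurable,
      C, fun ω => hC _ _⟩
  have hXτmem : ∀ τ : I, MemLinfty (𝓕 T) (fun ω => X (τ.1 ω) ω) :=
    fun τ => hstMem τ.1 τ.2.1 (fun ω => (τ.2.2 ω).2)
  have memT : ∀ ξ : Ω → ℝ, MemLinfty (𝓕 t) ξ → MemLinfty (𝓕 T) ξ :=
    fun ξ h => ⟨h.1.mono (𝓕.mono htT) le_rfl, h.2⟩
  have hfmemt : ∀ τ : I, MemLinfty (𝓕 t) (f τ) :=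
    fun τ => hErange t htmem _ (hXτmem τ)
  have hfmeas : ∀ τ : I, Measurable (f τ) :=
    fun τ => ((hfmemt τ).1).mono (𝓕.le t) le_rfl
  obtain ⟨hVtmeas, hVle, hVmin⟩ := hVess t htmem
  obtain ⟨hVtm, KV, hKV⟩ := hVmem t htmem
  -- bound for E t 0
  obtain ⟨hE0m, c0, hc0⟩ := hErange t htmem (fun _ => (0:ℝ))
    ⟨measurable_const, 0, by simp⟩
  set K : ℝ := max (max KV c0) 0 with hK
  have hK0 : (0:ℝ) ≤ K := le_max_right _ _
  have hKV' : KV ≤ K := le_trans (le_max_left _ _) (le_max_left _ _)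
  have hc0' : c0 ≤ K := le_trans (le_max_right _ _) (le_max_left _ _)
  -- uniform a.e. bound on f τ
  have hfK : ∀ τ : I, ∀ᵐ ω ∂P, |f τ ω| ≤ K := by
    intro τ
    have hlow : E t (fun _ => (0:ℝ)) ≤ᵐ[P] f τ :=
      hmono t htmem _ _ ⟨measurable_const, 0, by simp⟩ (hXτmem τ)
        (Filter.Eventually.of_forall fun ω => hXpos _ _)
    filter_upwards [hlow, hVle τ] with ω h1 h2
    have h3 : -K ≤ f τ ω := by
      have := abs_le.1 (hc0 ω)
      nlinarith [this.1, this.2]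
    have h4 : f τ ω ≤ K := le_trans h2 (le_trans (le_of_abs_le (hKV ω)) hKV')
    exact abs_le.2 ⟨h3, h4⟩
  -- integrability
  have hInt : ∀ τ : I, Integrable (f τ) P := by
    intro τ
    obtain ⟨c, hc'⟩ := (hfmemt τ).2
    exact (integrable_const c).mono' (hfmeas τ).aestronglyMeasurable
      (Filter.Eventually.of_forall fun ω => by simpa [Real.norm_eq_abs] using hc' ω)
  have hVmeas : Measurable (V t) := hVtm.mono (𝓕.le t) le_rfl
  have hIntV : Integrable (V t) P :=
    (integrable_const KV).mono' hVmeas.aestronglyMeasurable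
      (Filter.Eventually.of_forall fun ω => by simpa [Real.norm_eq_abs] using hKV ω)
  -- directedness
  have dir : ∀ τ1 τ2 : I, ∃ τ3 : I,
      f τ3 =ᵐ[P] fun ω => max (f τ1 ω) (f τ2 ω) := by
    intro τ1 τ2
    set A : Set Ω := {ω | f τ2 ω ≤ f τ1 ω} with hA
    have hAm : MeasurableSet[𝓕 t] A := measurableSet_le (hfmemt τ2).1 (hfmemt τ1).1
    set τ3 : Ω → ℝ := A.piecewise τ1.1 τ2.1 with hτ3
    have hbd : ∀ ω, t ≤ τ3 ω ∧ τ3 ω ≤ T := by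
      intro ω
      by_cases hω : ω ∈ A <;> simp [hτ3, Set.piecewise, hω, τ1.2.2 ω, τ2.2.2 ω]
    have hstop : IsStoppingTime 𝓕 (fun ω => (τ3 ω : WithTop ℝ)) := by
      intro u
      by_cases hu : t ≤ u
      · have : {ω | (τ3 ω : WithTop ℝ) ≤ u} = (A ∩ {ω | (τ1.1 ω : WithTop ℝ) ≤ u}) ∪ (Aᶜ ∩ {ω | (τ2.1 ω : WithTop ℝ) ≤ u}) := by
          ext ω
          by_cases hω : ω ∈ A <;> simp [hτ3, Set.piecewise, hω]
        rw [this]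
        exact ((𝓕.mono hu _ hAm).inter (τ1.2.1 u)).union
          (((𝓕.mono hu _ hAm).compl).inter (τ2.2.1 u))
      · have : {ω | (τ3 ω : WithTop ℝ) ≤ u} = ∅ := by
          ext ω
          simp only [Set.mem_setOf_eq, Set.mem_empty_iff_false, iff_false, WithTop.coe_le_coe, not_le]
          exact lt_of_lt_of_le (lt_of_not_ge hu) (hbd ω).1
        rw [this]
        exact @MeasurableSet.empty _ (𝓕 u)
    refine ⟨⟨τ3, hstop, hbd⟩, ?_⟩
    set ξ1 : Ω → ℝ := fun ω => X (τ1.1 ω) ω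
    set ξ2 : Ω → ℝ := fun ω => X (τ2.1 ω) ω
    set ξ3 : Ω → ℝ := fun ω => X (τ3 ω) ω
    have hξ3mem : MemLinfty (𝓕 T) ξ3 := hstMem τ3 hstop (fun ω => (hbd ω).2)
    have hind1 : A.indicator ξ3 = A.indicator ξ1 := by
      funext ω
      by_cases hω : ω ∈ A <;> simp [Set.indicator, hω, hτ3, Set.piecewise, ξ3, ξ1]
    have hind2 : Aᶜ.indicator ξ3 = Aᶜ.indicator ξ2 := by
      funext ω
      by_cases hω : ω ∈ A <;> simp [Set.indicator, hω, hτ3, Set.piecewise, ξ3, ξ2]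
    have e3 : A.indicator (E t ξ3) =ᵐ[P] E t (A.indicator ξ3) := h10 t htmem ξ3 hξ3mem A hAm
    have e1 : A.indicator (E t ξ1) =ᵐ[P] E t (A.indicator ξ1) := h10 t htmem ξ1 (hXτmem τ1) A hAm
    have e3' : Aᶜ.indicator (E t ξ3) =ᵐ[P] E t (Aᶜ.indicator ξ3) :=
      h10 t htmem ξ3 hξ3mem Aᶜ hAm.compl
    have e2 : Aᶜ.indicator (E t ξ2) =ᵐ[P] E t (Aᶜ.indicator ξ2) :=
      h10 t htmem ξ2 (hXτmem τ2) Aᶜ hAm.compl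
    have hAeq : A.indicator (E t ξ3) =ᵐ[P] A.indicator (E t ξ1) := by
      calc A.indicator (E t ξ3) =ᵐ[P] E t (A.indicator ξ3) := e3
        _ = E t (A.indicator ξ1) := by rw [hind1]
        _ =ᵐ[P] A.indicator (E t ξ1) := e1.symm
    have hAceq : Aᶜ.indicator (E t ξ3) =ᵐ[P] Aᶜ.indicator (E t ξ2) := by
      calc Aᶜ.indicator (E t ξ3) =ᵐ[P] E t (Aᶜ.indicator ξ3) := e3'
        _ = E t (Aᶜ.indicator ξ2) := by rw [hind2]
        _ =ᵐ[P] Aᶜ.indicator (E t ξ2) := e2.symm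
    filter_upwards [hAeq, hAceq] with ω h1 h2
    by_cases hω : ω ∈ A
    · have hω' : f τ2 ω ≤ f τ1 ω := hω
      simp only [Set.indicator_of_mem hω] at h1
      show E t ξ3 ω = max (f τ1 ω) (f τ2 ω)
      rw [max_eq_left hω']
      exact h1
    · have hω' : f τ1 ω < f τ2 ω := lt_of_not_ge hω
      simp only [Set.indicator_of_mem (Set.mem_compl hω)] at h2
      show E t ξ3 ω = max (f τ1 ω) (f τ2 ω)
      rw [max_eq_right hω'.le]
      exact h2
  -- nonempty index
  have τ0 : I := ⟨fun _ => t, isStoppingTime_const 𝓕 t, fun ω => ⟨le_rfl, htT⟩⟩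
  haveI : Nonempty I := ⟨τ0⟩
  -- supremum of integrals
  have hbdd : BddAbove (Set.range fun τ : I => ∫ ω, f τ ω ∂P) := by
    refine ⟨∫ ω, V t ω ∂P, ?_⟩
    rintro x ⟨τ, rfl⟩
    exact integral_mono_ae (hInt τ) hIntV (hVle τ)
  set S : ℝ := ⨆ τ : I, ∫ ω, f τ ω ∂P with hS
  have hle_S : ∀ τ : I, ∫ ω, f τ ω ∂P ≤ S := fun τ => le_ciSup hbdd τ
  have hexists : ∀ n : ℕ, ∃ τ : I, S - 1/(n+1) < ∫ ω, f τ ω ∂P := by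
    intro n
    refine exists_lt_of_lt_ciSup ?_
    have : (0:ℝ) < 1/(n+1) := by positivity
    linarith
  choose τseq hτseq using hexists
  -- increasing sequence
  obtain ⟨σ, hσ0, hσS⟩ : ∃ σ : ℕ → I, σ 0 = τseq 0 ∧
      ∀ n, f (σ (n+1)) =ᵐ[P] fun ω => max (f (σ n) ω) (f (τseq (n+1)) ω) := by
    choose g hg using dir
    exact ⟨fun n => Nat.rec (τseq 0) (fun n σn => g σn (τseq (n+1))) n, rfl,
      fun n => hg _ _⟩
  have hmonon : ∀ n, f (σ n) ≤ᵐ[P] f (σ (n+1)) := by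
    intro n
    filter_upwards [hσS n] with ω h
    rw [h]; exact le_max_left _ _
  have hIS : ∀ n, S - 1/(n+1) < ∫ ω, f (σ n) ω ∂P := by
    intro n
    cases n with
    | zero => simpa [hσ0] using hτseq 0
    | succ n =>
      have h1 : ∫ ω, f (τseq (n+1)) ω ∂P ≤ ∫ ω, f (σ (n+1)) ω ∂P := by
        refine integral_mono_ae (hInt _) (hInt _) ?_
        filter_upwards [hσS n] with ω h
        rw [h]; exact le_max_right _ _
      exact lt_of_lt_of_le (hτseq (n+1)) h1
  have htend_int : Tendsto (fun n => ∫ ω, f (σ n) ω ∂P) atTop (nhds S) := by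
    have hlow : Tendsto (fun n : ℕ => S - 1/(n+1)) atTop (nhds S) := by
      have := tendsto_one_div_add_atTop_nhds_zero_nat (𝕜 := ℝ)
      have h2 := tendsto_const_nhds (x := S) (f := atTop (α := ℕ)) |>.sub this
      simpa using h2
    exact tendsto_of_tendsto_of_tendsto_of_le_of_le hlow tendsto_const_nhds
      (fun n => (hIS n).le) (fun n => hle_S (σ n))
  -- clamping
  set clamp : ℝ → ℝ := fun x => max (-K) (min x K) with hclamp
  have hclampMeas : Measurable clamp :=
    measurable_const.max (measurable_id.min measurable_const)
  have hclampMono : Monotone clamp := fun x y hxy =>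
    max_le_max le_rfl (min_le_min hxy le_rfl)
  have hclampBd : ∀ x, |clamp x| ≤ K := by
    intro x
    rw [abs_le]
    constructor
    · exact le_max_left _ _
    · exact max_le (by linarith) (min_le_right _ _)
  have hclampEq : ∀ x : ℝ, |x| ≤ K → clamp x = x := by
    intro x hx
    rw [abs_le] at hx
    simp [hclamp, min_eq_left hx.2, max_eq_right hx.1]
  -- the limit function
  set g : Ω → ℝ := fun ω => ⨆ n, clamp (f (σ n) ω) with hg
  have hgbddA : ∀ ω, BddAbove (Set.range fun n => clamp (f (σ n) ω)) := by
    intro ω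
    refine ⟨K, ?_⟩
    rintro x ⟨n, rfl⟩
    exact le_of_abs_le (hclampBd _)
  have hgK : ∀ ω, |g ω| ≤ K := by
    intro ω
    rw [abs_le]
    constructor
    · refine le_trans ?_ (le_ciSup (hgbddA ω) 0)
      have := abs_le.1 (hclampBd (f (σ 0) ω))
      linarith [this.1]
    · exact ciSup_le fun n => le_of_abs_le (hclampBd _)
  have hgmT : Measurable[𝓕 T] g := by
    refine Measurable.iSup fun n => ?_
    exact hclampMeas.comp (((hfmemt (σ n)).1).mono (𝓕.mono htT) le_rfl)
  have hgmeas : Measurable g := hgmT.mono (𝓕.le T) le_rfl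
  -- a.e. goodness set
  have hclamp_ae : ∀ᵐ ω ∂P, ∀ n, clamp (f (σ n) ω) = f (σ n) ω :=
    ae_all_iff.mpr fun n => (hfK (σ n)).mono fun ω h => hclampEq _ h
  have hmono_ae : ∀ᵐ ω ∂P, ∀ n, f (σ n) ω ≤ f (σ (n+1)) ω := ae_all_iff.mpr hmonon
  have htendg : ∀ᵐ ω ∂P, Tendsto (fun n => f (σ n) ω) atTop (nhds (g ω)) := by
    filter_upwards [hclamp_ae, hmono_ae] with ω h1 h2
    have hmo : Monotone fun n => clamp (f (σ n) ω) := by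
      refine monotone_nat_of_le_succ fun n => ?_
      rw [h1 n, h1 (n+1)]; exact h2 n
    have := tendsto_atTop_ciSup hmo (hgbddA ω)
    refine this.congr fun n => h1 n
  have hIntg : Integrable g P :=
    (integrable_const K).mono' hgmeas.aestronglyMeasurable
      (Filter.Eventually.of_forall fun ω => by simpa [Real.norm_eq_abs] using hgK ω)
  have htend_int_g : Tendsto (fun n => ∫ ω, f (σ n) ω ∂P) atTop (nhds (∫ ω, g ω ∂P)) := by
    refine tendsto_integral_of_dominated_convergence (fun _ => K)
      (fun n => (hfmeas (σ n)).aestronglyMeasurable) (integrable_const K)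
      (fun n => (hfK (σ n)).mono fun ω h => by simpa [Real.norm_eq_abs] using h) htendg
  have hSg : S = ∫ ω, g ω ∂P := tendsto_nhds_unique htend_int htend_int_g
  -- g dominates every f τ a.e.
  have hdom : ∀ τ : I, f τ ≤ᵐ[P] g := by
    intro τ
    have hIntmax : ∀ h : Ω → ℝ, Measurable h → Integrable h P →
        Integrable (fun ω => max (f τ ω) (h ω)) P := by
      intro h hm hint
      have := (hInt τ).sup hint
      exact this
    have hmaxn : ∀ n, ∫ ω, max (f τ ω) (f (σ n) ω) ∂P ≤ S := by
      intro n
      obtain ⟨ρ, hρ⟩ := dir τ (σ n)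
      calc ∫ ω, max (f τ ω) (f (σ n) ω) ∂P = ∫ ω, f ρ ω ∂P :=
            (integral_congr_ae hρ).symm
        _ ≤ S := hle_S ρ
    have htendmax : Tendsto (fun n => ∫ ω, max (f τ ω) (f (σ n) ω) ∂P) atTop
        (nhds (∫ ω, max (f τ ω) (g ω) ∂P)) := by
      refine tendsto_integral_of_dominated_convergence (fun ω => |f τ ω| + K)
        (fun n => ((hfmeas τ).max (hfmeas (σ n))).aestronglyMeasurable)
        ((hInt τ).abs.add (integrable_const K)) ?_ ?_
      · intro n
        filter_upwards [hfK (σ n)] with ω h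
        rw [Real.norm_eq_abs, abs_le]
        have hb := abs_le.1 h
        constructor
        · have h1 : -(|f τ ω| + K) ≤ f τ ω := by
            have := neg_abs_le (f τ ω); linarith [abs_nonneg (f τ ω), hK0]
          exact le_trans h1 (le_max_left _ _)
        · exact max_le (by linarith [le_abs_self (f τ ω)])
            (by linarith [abs_nonneg (f τ ω)])
      · filter_upwards [htendg] with ω h
        exact (tendsto_const_nhds.max h)
    have hle : ∫ ω, max (f τ ω) (g ω) ∂P ≤ ∫ ω, g ω ∂P := by
      rw [← hSg]
      exact le_of_tendsto htendmax (Filter.Eventually.of_forall hmaxn)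
    have hintmaxg : Integrable (fun ω => max (f τ ω) (g ω)) P := (hInt τ).sup hIntg
    have hnonneg : 0 ≤ᵐ[P] fun ω => max (f τ ω) (g ω) - g ω :=
      Filter.Eventually.of_forall fun ω => by simp [le_max_right]
    have hintdiff : Integrable (fun ω => max (f τ ω) (g ω) - g ω) P :=
      hintmaxg.sub hIntg
    have hzero : ∫ ω, (max (f τ ω) (g ω) - g ω) ∂P = 0 := by
      have h1 : ∫ ω, (max (f τ ω) (g ω) - g ω) ∂P =
          (∫ ω, max (f τ ω) (g ω) ∂P) - ∫ ω, g ω ∂P :=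
        integral_sub hintmaxg hIntg
      have h2 : 0 ≤ ∫ ω, (max (f τ ω) (g ω) - g ω) ∂P :=
        integral_nonneg_of_ae hnonneg
      linarith
    have := (integral_eq_zero_iff_of_nonneg_ae hnonneg hintdiff).1 hzero
    filter_upwards [this] with ω h
    have : max (f τ ω) (g ω) = g ω := by
      have h' : max (f τ ω) (g ω) - g ω = 0 := h
      linarith
    calc f τ ω ≤ max (f τ ω) (g ω) := le_max_left _ _
      _ = g ω := this
  -- g = V t a.e.
  have hVleg : V t ≤ᵐ[P] g := hVmin g hgmeas hdom
  have hgleV : g ≤ᵐ[P] V t := by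
    filter_upwards [htendg, ae_all_iff.mpr fun n => hVle (σ n)] with ω h1 h2
    exact le_of_tendsto h1 (Filter.Eventually.of_forall h2)
  have hVg : V t =ᵐ[P] g := hVleg.antisymm hgleV
  -- the clamped sequence
  set Gn : ℕ → Ω → ℝ := fun n ω => clamp (f (σ n) ω) with hGn
  have hGmem : ∀ n, MemLinfty (𝓕 T) (Gn n) := fun n =>
    ⟨hclampMeas.comp (((hfmemt (σ n)).1).mono (𝓕.mono htT) le_rfl), K,
      fun ω => hclampBd _⟩
  have hgmem : MemLinfty (𝓕 T) g := ⟨hgmT, K, hgK⟩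
  have hGbd : ∃ c : ℝ, ∀ n ω, |Gn n ω| ≤ c := ⟨K, fun n ω => hclampBd _⟩
  have hGmono_ae : ∀ᵐ ω ∂P, Monotone fun n => Gn n ω := by
    filter_upwards [hmono_ae] with ω h
    exact monotone_nat_of_le_succ fun n => hclampMono (h n)
  have hGtend : ∀ᵐ ω ∂P, Tendsto (fun n => Gn n ω) atTop (nhds (g ω)) := by
    filter_upwards [hclamp_ae, htendg] with ω h1 h2
    exact h2.congr fun n => (h1 n).symm
  have hEcb : ∀ᵐ ω ∂P, Tendsto (fun n => E s (Gn n) ω) atTop (nhds (E s g ω)) :=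
    hcb s hsmem Gn g hGmem hgmem hGbd hGmono_ae hGtend
  -- identify E s (Gn n) with E s of the stopped value, a.e.
  have hGn_eq : ∀ n, Gn n =ᵐ[P] f (σ n) := fun n =>
    (hfK (σ n)).mono fun ω h => hclampEq _ h
  have hEG : ∀ n, E s (Gn n) =ᵐ[P] E s (f (σ n)) := by
    intro n
    refine EventuallyLE.antisymm ?_ ?_
    · exact hmono s hsmem _ _ (hGmem n) (memT _ (hfmemt (σ n))) (hGn_eq n).le
    · exact hmono s hsmem _ _ (memT _ (hfmemt (σ n))) (hGmem n) (hGn_eq n).symm.le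
  have hEtc : ∀ n, E s (f (σ n)) =ᵐ[P] E s (fun ω => X ((σ n).1 ω) ω) := fun n =>
    htc s t hs hst htT (fun ω => X ((σ n).1 ω) ω) (hXτmem (σ n))
  have hVs_le : ∀ n, E s (fun ω => X ((σ n).1 ω) ω) ≤ᵐ[P] V s := by
    intro n
    exact (hVess s hsmem).2.1 ⟨(σ n).1, (σ n).2.1,
      fun ω => ⟨hst.trans ((σ n).2.2 ω).1, ((σ n).2.2 ω).2⟩⟩
  have hn : ∀ n, E s (Gn n) ≤ᵐ[P] V s := fun n =>
    (((hEG n).trans (hEtc n)).le).trans (hVs_le n)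
  have hEg_eq : E s g =ᵐ[P] E s (V t) := by
    refine EventuallyLE.antisymm ?_ ?_
    · exact hmono s hsmem _ _ hgmem (memT _ (hVmem t htmem)) hVg.symm.le
    · exact hmono s hsmem _ _ (memT _ (hVmem t htmem)) hgmem hVg.le
  filter_upwards [hEcb, hEg_eq, ae_all_iff.mpr hn] with ω htd heq hle
  rw [← heq]
  exact le_of_tendsto htd (Filter.Eventually.of_forall hle)
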